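/- Let S be a periodic semigroup whose idempotents all lie in the center Z(S). Then: (a) for every x ∈ S the monogenic semigroup {x^n : n ≥ 1} contains a unique idempotent π(x); (b) the map π : S → E(S) is a semigroup homomorphism, i.e., π(xy) = π(x)π(y) for all x,y ∈ S; (c) the Clifford part H(S) is a subsemigroup of S, and in fact H_x · H_y ⊆ H_{xy} for all idempotents x,y ∈ E(S). -/

import Mathlib

/-- `spow x n` denotes the power `x^(n+1)` in a semigroup (so exponents `n ≥ 1` are
the values `spow x (n-1)`). -/
def spow {S : Type*} [Semigroup S] (x : S) : ℕ → S
  | 0 => x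
  | n + 1 => spow x n * x

/-- The `H`-class of `a` in a semigroup `S`:
`H_a = {x ∈ S | xS¹ = aS¹ ∧ S¹x = S¹a}`, computed in `S¹ = WithOne S`. -/
def HClass {S : Type*} [Semigroup S] (a : S) : Set S :=
  {x | {y : WithOne S | ∃ s : WithOne S, y = (x : WithOne S) * s} =
         {y : WithOne S | ∃ s : WithOne S, y = (a : WithOne S) * s} ∧
       {y : WithOne S | ∃ s : WithOne S, y = s * (x : WithOne S)} =
         {y : WithOne S | ∃ s : WithOne S, y = s * (a : WithOne S)}}

/-- The center `Z(S)` of a semigroup. -/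
def centerSet (S : Type*) [Semigroup S] : Set S := {z : S | ∀ x : S, z * x = x * z}

/-- The Clifford part `H(S)`: the union of all `H`-classes of idempotents
(equivalently, of all maximal subgroups). -/
def CliffordPart (S : Type*) [Semigroup S] : Set S :=
  {x : S | ∃ e : S, IsIdempotentElem e ∧ x ∈ HClass e}

/-- A semigroup is chain-finite if it contains no infinite chain, where a chain
is a set `C` with `x * y ∈ {x, y}` for all `x, y ∈ C`. -/
def ChainFinite (S : Type*) [Semigroup S] : Prop :=
  ∀ C : Set S, (∀ x ∈ C, ∀ y ∈ C, x * y = x ∨ x * y = y) → C.Finite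

/-- A semigroup is periodic if every element has an idempotent power `x^n`, `n ≥ 1`. -/
def IsPeriodicSemigroup (S : Type*) [Semigroup S] : Prop :=
  ∀ x : S, ∃ n : ℕ, IsIdempotentElem (spow x n)

/-- The maximal subgroup `H_e` of an idempotent `e` is bounded: some power `n ≥ 1`
of every element equals `e`. -/
def BoundedHClass {S : Type*} [Semigroup S] (e : S) : Prop :=
  ∃ n : ℕ, ∀ x ∈ HClass e, spow x n = e

/-- A semigroup `X` is `T₁S`-closed if for every topological semigroup `Y`
satisfying the `T₁` separation axiom and every injective homomorphism `h : X → Y`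
with discrete image, the image of `h` is closed in `Y`. -/
def IsT1SClosed (X : Type*) [Semigroup X] : Prop :=
  ∀ (Y : Type*) [Semigroup Y] [TopologicalSpace Y] [ContinuousMul Y] [T1Space Y],
    ∀ h : X →ₙ* Y, Function.Injective h → DiscreteTopology (Set.range h) →
      IsClosed (Set.range h)

/-- A semigroup `X` is `TzS`-closed if for every Hausdorff zero-dimensional
topological semigroup `Y` (i.e. the clopen sets form a base of the topology) and
every injective homomorphism `h : X → Y` with discrete image, the image of `h`
is closed in `Y`. -/
def IsTzSClosed (X : Type*) [Semigroup X] : Prop :=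
  ∀ (Y : Type*) [Semigroup Y] [TopologicalSpace Y] [ContinuousMul Y] [T2Space Y],
    TopologicalSpace.IsTopologicalBasis {s : Set Y | IsClopen s} →
    ∀ h : X →ₙ* Y, Function.Injective h → DiscreteTopology (Set.range h) →
      IsClosed (Set.range h)

section aux
variable {S : Type*} [Semigroup S]

lemma spow_succ' (x : S) (n : ℕ) : spow x (n+1) = x * spow x n := by
  induction n with
  | zero => rfl
  | succ k ih =>
    show spow x (k+1) * x = x * (spow x k * x)
    rw [ih, mul_assoc]

lemma spow_mul_spow (x : S) (m n : ℕ) : spow x m * spow x n = spow x (m + n + 1) := by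
  induction n with
  | zero => rfl
  | succ k ih =>
    show spow x m * (spow x k * x) = spow x (m + k + 1) * x
    rw [← mul_assoc, ih]

lemma spow_idem {e : S} (he : IsIdempotentElem e) (n : ℕ) : spow e n = e := by
  induction n with
  | zero => rfl
  | succ k ih => show spow e k * e = e; rw [ih]; exact he

lemma spow_spow (x : S) (a b : ℕ) : spow (spow x a) b = spow x (a*b + a + b) := by
  induction b with
  | zero =>
    show spow x a = spow x (a*0 + a + 0)
    congr 1
    ring
  | succ k ih =>
    show spow (spow x a) k * spow x a = _
    rw [ih, spow_mul_spow]
    congr 1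
    ring

lemma central_spow {z w : S} (hz : ∀ s, z * s = s * z) (hzz : z * z = z) (k : ℕ) :
    spow (z*w) k = z * spow w k := by
  induction k with
  | zero => rfl
  | succ n ih =>
    show spow (z*w) n * (z*w) = z * (spow w n * w)
    rw [ih]
    calc (z * spow w n) * (z * w) = (spow w n * z) * (z * w) := by rw [hz (spow w n)]
      _ = ((spow w n * z) * z) * w := by rw [mul_assoc (spow w n * z)]
      _ = (spow w n * (z * z)) * w := by rw [mul_assoc (spow w n)]
      _ = (spow w n * z) * w := by rw [hzz]
      _ = (z * spow w n) * w := by rw [← hz]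
      _ = z * (spow w n * w) := mul_assoc _ _ _

lemma withOne_central {x : S} (hx : ∀ s : S, x * s = s * x) :
    ∀ w : WithOne S, (x : WithOne S) * w = w * (x : WithOne S) := by
  intro w
  induction w using WithOne.recOneCoe with
  | one => rw [mul_one, one_mul]
  | coe s => rw [← WithOne.coe_mul, ← WithOne.coe_mul, hx]

end aux

section aux2
variable {S : Type*} [Semigroup S]

lemma idem_pow_eq_of_right_inv {g a r p : S} (har : a * r = g) (hag : a * g = a)
    (M : ℕ) (hp : spow a M = p) (hpp : p * p = p) (hpg : p * g = p) : p = g := by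
  have key : ∀ k, spow a k * spow r k = g := by
    intro k
    induction k with
    | zero => exact har
    | succ n ih =>
      calc spow a (n+1) * spow r (n+1)
          = (a * spow a n) * (spow r n * r) := by rw [spow_succ']; rfl
        _ = a * ((spow a n * spow r n) * r) := by rw [mul_assoc, mul_assoc]
        _ = a * (g * r) := by rw [ih]
        _ = (a * g) * r := by rw [mul_assoc]
        _ = a * r := by rw [hag]
        _ = g := har
  calc p = p * g := hpg.symm
    _ = p * (spow a M * spow r M) := by rw [key]
    _ = (p * spow a M) * spow r M := by rw [mul_assoc]
    _ = (p * p) * spow r M := by rw [hp]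
    _ = p * spow r M := by rw [hpp]
    _ = spow a M * spow r M := by rw [hp]
    _ = g := key M

lemma idem_pow_eq_of_left_inv {g b l q : S} (hlb : l * b = g) (hgb : g * b = b)
    (M : ℕ) (hq : spow b M = q) (hqq : q * q = q) (hgq : g * q = q) : q = g := by
  have key : ∀ k, spow l k * spow b k = g := by
    intro k
    induction k with
    | zero => exact hlb
    | succ n ih =>
      calc spow l (n+1) * spow b (n+1)
          = (l * spow l n) * (spow b n * b) := by rw [spow_succ']; rfl
        _ = l * ((spow l n * spow b n) * b) := by rw [mul_assoc, mul_assoc]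
        _ = l * (g * b) := by rw [ih]
        _ = l * b := by rw [hgb]
        _ = g := hlb
  calc q = g * q := hgq.symm
    _ = (spow l M * spow b M) * q := by rw [key]
    _ = spow l M * (q * q) := by rw [mul_assoc, hq]
    _ = spow l M * q := by rw [hqq]
    _ = spow l M * spow b M := by rw [hq]
    _ = g := key M

end aux2

section aux3
variable {S : Type*} [Semigroup S]

lemma central_glue {g x y : S} (hcg : ∀ s, g * s = s * g) (hgg : g * g = g) :
    (g * x) * (g * y) = g * (x * y) := by
  calc (g * x) * (g * y) = g * (x * (g * y)) := mul_assoc _ _ _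
    _ = g * ((x * g) * y) := by rw [mul_assoc]
    _ = g * ((g * x) * y) := by rw [← hcg x]
    _ = g * (g * (x * y)) := by rw [mul_assoc]
    _ = (g * g) * (x * y) := by rw [← mul_assoc]
    _ = g * (x * y) := by rw [hgg]

lemma central_pi_mul {x y e f g : S} {nx ny c : ℕ}
    (hex : spow x nx = e) (hce : ∀ s, e * s = s * e) (hee : e * e = e)
    (hfy : spow y ny = f) (hcf : ∀ s, f * s = s * f) (hff : f * f = f)
    (hgxy : spow (x*y) c = g) (hcg : ∀ s, g * s = s * g) (hgg : g * g = g) :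
    g = e * f := by
  set u := g * (x * y) with hu_def
  have hab : (g * x) * (g * y) = u := central_glue hcg hgg
  have hupow : ∀ k, spow u k = g * spow (x*y) k := central_spow hcg hgg
  have hxy2c : spow (x*y) (2*c+1) = g := by
    have h1 := spow_mul_spow (x*y) c c
    rw [hgxy, hgg] at h1
    rw [show 2*c+1 = c+c+1 by ring, ← h1]
  have hu2c : spow u (2*c+1) = g := by rw [hupow, hxy2c, hgg]
  -- Step A : g * e = g
  have hge : g * e = g := by
    have har : (g*x) * ((g*y) * spow u (2*c)) = g := by
      calc (g*x) * ((g*y) * spow u (2*c)) = ((g*x)*(g*y)) * spow u (2*c) :=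
            (mul_assoc _ _ _).symm
        _ = u * spow u (2*c) := by rw [hab]
        _ = spow u (2*c+1) := (spow_succ' u (2*c)).symm
        _ = g := hu2c
    have hag : (g*x)*g = g*x := by
      calc (g*x)*g = g*(x*g) := mul_assoc _ _ _
        _ = g*(g*x) := by rw [← hcg x]
        _ = (g*g)*x := (mul_assoc _ _ _).symm
        _ = g*x := by rw [hgg]
    have hpa : spow (g*x) nx = g*e := by rw [central_spow hcg hgg, hex]
    have hpp : (g*e)*(g*e) = g*e := by
      calc (g*e)*(g*e) = g*(e*(g*e)) := mul_assoc _ _ _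
        _ = g*((e*g)*e) := by rw [mul_assoc]
        _ = g*((g*e)*e) := by rw [← hcg e]
        _ = g*(g*(e*e)) := by rw [mul_assoc]
        _ = (g*g)*(e*e) := (mul_assoc _ _ _).symm
        _ = g*e := by rw [hgg, hee]
    have hpg : (g*e)*g = g*e := by
      calc (g*e)*g = g*(e*g) := mul_assoc _ _ _
        _ = g*(g*e) := by rw [← hcg e]
        _ = (g*g)*e := (mul_assoc _ _ _).symm
        _ = g*e := by rw [hgg]
    exact idem_pow_eq_of_right_inv har hag nx hpa hpp hpg
  -- Step B : g * f = g
  have hgf : g * f = g := by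
    have hlb : (spow u (2*c) * (g*x)) * (g*y) = g := by
      calc (spow u (2*c) * (g*x)) * (g*y) = spow u (2*c) * ((g*x)*(g*y)) := mul_assoc _ _ _
        _ = spow u (2*c) * u := by rw [hab]
        _ = spow u (2*c+1) := rfl
        _ = g := hu2c
    have hgb : g*(g*y) = g*y := by rw [← mul_assoc, hgg]
    have hqb : spow (g*y) ny = g*f := by rw [central_spow hcg hgg, hfy]
    have hqq : (g*f)*(g*f) = g*f := by
      calc (g*f)*(g*f) = g*(f*(g*f)) := mul_assoc _ _ _
        _ = g*((f*g)*f) := by rw [mul_assoc]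
        _ = g*((g*f)*f) := by rw [← hcg f]
        _ = g*(g*(f*f)) := by rw [mul_assoc]
        _ = (g*g)*(f*f) := (mul_assoc _ _ _).symm
        _ = g*f := by rw [hgg, hff]
    have hgq : g*(g*f) = g*f := by rw [← mul_assoc, hgg]
    exact idem_pow_eq_of_left_inv hlb hgb ny hqb hqq hgq
  -- Step C : (e*f) * g = e*f
  set h := e * f with hh_def
  have hch : ∀ s, h * s = s * h := by
    intro s
    calc (e*f)*s = e*(f*s) := mul_assoc _ _ _
      _ = e*(s*f) := by rw [hcf s]
      _ = (e*s)*f := (mul_assoc _ _ _).symm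
      _ = (s*e)*f := by rw [hce s]
      _ = s*(e*f) := mul_assoc _ _ _
  have hfe : f * e = e * f := (hce f).symm
  have hhh : h * h = h := by
    calc (e*f)*(e*f) = e*((f*e)*f) := by rw [mul_assoc, ← mul_assoc f e f]
      _ = e*((e*f)*f) := by rw [hfe]
      _ = e*(e*(f*f)) := by rw [mul_assoc]
      _ = (e*e)*(f*f) := (mul_assoc _ _ _).symm
      _ = e*f := by rw [hee, hff]
  have hhe : h * e = h := by
    calc (e*f)*e = e*(f*e) := mul_assoc _ _ _
      _ = e*(e*f) := by rw [hfe]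
      _ = (e*e)*f := (mul_assoc _ _ _).symm
      _ = e*f := by rw [hee]
  have hhf : h * f = h := by
    calc (e*f)*f = e*(f*f) := mul_assoc _ _ _
      _ = e*f := by rw [hff]
  have hhg : h * g = h := by
    set a2 := h * x with ha2
    set b2 := h * y with hb2
    have hab2 : a2 * b2 = h * (x*y) := central_glue hch hhh
    have ha2pow : ∀ k, spow a2 k = h * spow x k := central_spow hch hhh
    have hb2pow : ∀ k, spow b2 k = h * spow y k := central_spow hch hhh
    have hx2 : spow x (2*nx+1) = e := by
      have h1 := spow_mul_spow x nx nx
      rw [hex, hee] at h1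
      rw [show 2*nx+1 = nx+nx+1 by ring, ← h1]
    have hy2 : spow y (2*ny+1) = f := by
      have h1 := spow_mul_spow y ny ny
      rw [hfy, hff] at h1
      rw [show 2*ny+1 = ny+ny+1 by ring, ← h1]
    have ha2h : spow a2 (2*nx+1) = h := by rw [ha2pow, hx2, hhe]
    have hb2h : spow b2 (2*ny+1) = h := by rw [hb2pow, hy2, hhf]
    have har2 : a2 * spow a2 (2*nx) = h := by rw [← spow_succ', ha2h]
    have hra2 : spow a2 (2*nx) * a2 = h := ha2h
    have hbs2 : b2 * spow b2 (2*ny) = h := by rw [← spow_succ', hb2h]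
    have hsb2 : spow b2 (2*ny) * b2 = h := hb2h
    have ha2habs : a2 * h = a2 := by
      calc (h*x)*h = h*(x*h) := mul_assoc _ _ _
        _ = h*(h*x) := by rw [← hch x]
        _ = (h*h)*x := (mul_assoc _ _ _).symm
        _ = h*x := by rw [hhh]
    have huh : (h*(x*y)) * h = h*(x*y) := by
      calc (h*(x*y))*h = h*((x*y)*h) := mul_assoc _ _ _
        _ = h*(h*(x*y)) := by rw [← hch (x*y)]
        _ = (h*h)*(x*y) := (mul_assoc _ _ _).symm
        _ = h*(x*y) := by rw [hhh]
    have huv : (h*(x*y)) * (spow b2 (2*ny) * spow a2 (2*nx)) = h := by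
      calc (h*(x*y)) * (spow b2 (2*ny) * spow a2 (2*nx))
          = (a2 * b2) * (spow b2 (2*ny) * spow a2 (2*nx)) := by rw [hab2]
        _ = a2 * ((b2 * spow b2 (2*ny)) * spow a2 (2*nx)) := by
            rw [mul_assoc, ← mul_assoc b2]
        _ = a2 * (h * spow a2 (2*nx)) := by rw [hbs2]
        _ = (a2 * h) * spow a2 (2*nx) := (mul_assoc _ _ _).symm
        _ = a2 * spow a2 (2*nx) := by rw [ha2habs]
        _ = h := har2
    have hP : spow (h*(x*y)) c = h*g := by rw [central_spow hch hhh, hgxy]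
    have hPP : (h*g)*(h*g) = h*g := by
      calc (h*g)*(h*g) = h*(g*(h*g)) := mul_assoc h g (h*g)
        _ = h*((g*h)*g) := by rw [← mul_assoc g h g]
        _ = h*((h*g)*g) := by rw [← hch g]
        _ = h*(h*(g*g)) := by rw [mul_assoc h g g]
        _ = (h*h)*(g*g) := (mul_assoc h h (g*g)).symm
        _ = h*g := by rw [hhh, hgg]
    have hPh : (h*g)*h = h*g := by
      calc (h*g)*h = h*(g*h) := mul_assoc _ _ _
        _ = h*(h*g) := by rw [← hch g]
        _ = (h*h)*g := (mul_assoc _ _ _).symm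
        _ = h*g := by rw [hhh]
    exact idem_pow_eq_of_right_inv huv huh c hP hPP hPh
  -- conclusion
  have hgh : g * h = g := by
    rw [hh_def, ← mul_assoc, hge, hgf]
  calc g = g * h := hgh.symm
    _ = h * g := (hch g).symm
    _ = h := hhg

end aux3

section aux4
variable {S : Type*} [Semigroup S]

lemma hclass_facts {x a : S} (hxx : IsIdempotentElem x) (ha : a ∈ HClass x) :
    ((x : WithOne S) * a = a) ∧ ((a : WithOne S) * x = a) ∧
    (∃ A : WithOne S, (a : WithOne S) * A = x) ∧
    (∃ B : WithOne S, B * (a : WithOne S) = x) := by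
  have hXX : (x : WithOne S) * x = x := by
    rw [← WithOne.coe_mul, hxx]
  obtain ⟨hR, hL⟩ := ha
  have haR : ∃ s : WithOne S, (a : WithOne S) = (x : WithOne S) * s := by
    have hmem : (a : WithOne S) ∈ {y : WithOne S | ∃ s, y = (a : WithOne S) * s} :=
      ⟨1, (mul_one _).symm⟩
    rw [hR] at hmem
    exact hmem
  have hxR : ∃ t : WithOne S, (x : WithOne S) = (a : WithOne S) * t := by
    have hmem : (x : WithOne S) ∈ {y : WithOne S | ∃ s, y = (x : WithOne S) * s} :=
      ⟨1, (mul_one _).symm⟩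
    rw [← hR] at hmem
    exact hmem
  have haL : ∃ s : WithOne S, (a : WithOne S) = s * (x : WithOne S) := by
    have hmem : (a : WithOne S) ∈ {y : WithOne S | ∃ s, y = s * (a : WithOne S)} :=
      ⟨1, (one_mul _).symm⟩
    rw [hL] at hmem
    exact hmem
  have hxL : ∃ t : WithOne S, (x : WithOne S) = t * (a : WithOne S) := by
    have hmem : (x : WithOne S) ∈ {y : WithOne S | ∃ s, y = s * (x : WithOne S)} :=
      ⟨1, (one_mul _).symm⟩
    rw [← hL] at hmem
    exact hmem
  obtain ⟨s, hs⟩ := haR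
  obtain ⟨s', hs'⟩ := haL
  obtain ⟨t, ht⟩ := hxR
  obtain ⟨t', ht'⟩ := hxL
  have hXa : (x : WithOne S) * a = a := by
    conv_lhs => rw [hs]
    rw [← mul_assoc, hXX, ← hs]
  have haX : (a : WithOne S) * x = a := by
    conv_lhs => rw [hs']
    rw [mul_assoc, hXX, ← hs']
  exact ⟨hXa, haX, ⟨t, ht.symm⟩, ⟨t', ht'.symm⟩⟩

lemma hMul_mem_hclass {x y : S}
    (hxc : ∀ s : S, x * s = s * x) (hyc : ∀ s : S, y * s = s * y)
    (hx : IsIdempotentElem x) (hy : IsIdempotentElem y) :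
    ∀ a ∈ HClass x, ∀ b ∈ HClass y, a * b ∈ HClass (x * y) := by
  intro a ha b hb
  have hXc := withOne_central hxc
  have hYc := withOne_central hyc
  obtain ⟨hXa, haX, ⟨A, hA⟩, ⟨A', hA'⟩⟩ := hclass_facts hx ha
  obtain ⟨hYb, hbY, ⟨B, hB⟩, ⟨B', hB'⟩⟩ := hclass_facts hy hb
  have key1 : ((x : WithOne S) * y) * ((a : WithOne S) * b) = (a : WithOne S) * b := by
    calc ((x : WithOne S) * y) * ((a : WithOne S) * b)
        = (x : WithOne S) * ((y : WithOne S) * ((a : WithOne S) * b)) := mul_assoc _ _ _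
      _ = (x : WithOne S) * (((y : WithOne S) * a) * b) := by rw [mul_assoc]
      _ = (x : WithOne S) * (((a : WithOne S) * y) * b) := by rw [hYc (a : WithOne S)]
      _ = (x : WithOne S) * ((a : WithOne S) * ((y : WithOne S) * b)) := by rw [mul_assoc]
      _ = (x : WithOne S) * ((a : WithOne S) * b) := by rw [hYb]
      _ = ((x : WithOne S) * a) * b := (mul_assoc _ _ _).symm
      _ = (a : WithOne S) * b := by rw [hXa]
  have key2 : ((a : WithOne S) * b) * (B * A) = (x : WithOne S) * y := by
    calc ((a : WithOne S) * b) * (B * A)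
        = (a : WithOne S) * (((b : WithOne S) * B) * A) := by rw [mul_assoc, ← mul_assoc (b : WithOne S)]
      _ = (a : WithOne S) * ((y : WithOne S) * A) := by rw [hB]
      _ = ((a : WithOne S) * y) * A := (mul_assoc _ _ _).symm
      _ = ((y : WithOne S) * a) * A := by rw [← hYc (a : WithOne S)]
      _ = (y : WithOne S) * ((a : WithOne S) * A) := mul_assoc _ _ _
      _ = (y : WithOne S) * x := by rw [hA]
      _ = (x : WithOne S) * y := hYc (x : WithOne S)
  have key3 : ((a : WithOne S) * b) * ((x : WithOne S) * y) = (a : WithOne S) * b := by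
    calc ((a : WithOne S) * b) * ((x : WithOne S) * y)
        = (a : WithOne S) * (((b : WithOne S) * x) * y) := by rw [mul_assoc, ← mul_assoc (b : WithOne S)]
      _ = (a : WithOne S) * (((x : WithOne S) * b) * y) := by rw [← hXc (b : WithOne S)]
      _ = ((a : WithOne S) * x) * ((b : WithOne S) * y) := by
          rw [mul_assoc (x : WithOne S), ← mul_assoc (a : WithOne S)]
      _ = (a : WithOne S) * b := by rw [haX, hbY]
  have key4 : (B' * A') * ((a : WithOne S) * b) = (x : WithOne S) * y := by
    calc (B' * A') * ((a : WithOne S) * b)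
        = B' * ((A' * a) * b) := by rw [mul_assoc, ← mul_assoc A']
      _ = B' * ((x : WithOne S) * b) := by rw [hA']
      _ = B' * ((b : WithOne S) * x) := by rw [hXc (b : WithOne S)]
      _ = (B' * b) * x := (mul_assoc _ _ _).symm
      _ = (y : WithOne S) * x := by rw [hB']
      _ = (x : WithOne S) * y := hYc (x : WithOne S)
  constructor
  · ext w
    simp only [Set.mem_setOf_eq, WithOne.coe_mul]
    constructor
    · rintro ⟨s, rfl⟩
      exact ⟨(a : WithOne S) * b * s, by rw [← mul_assoc, key1]⟩
    · rintro ⟨s, rfl⟩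
      exact ⟨B * A * s, by
        rw [← mul_assoc ((a : WithOne S) * b) (B * A) s, key2]⟩
  · ext w
    simp only [Set.mem_setOf_eq, WithOne.coe_mul]
    constructor
    · rintro ⟨s, rfl⟩
      exact ⟨s * ((a : WithOne S) * b), by
        rw [mul_assoc s ((a : WithOne S) * b) ((x : WithOne S) * y), key3]⟩
    · rintro ⟨s, rfl⟩
      exact ⟨s * (B' * A'), by
        rw [mul_assoc s (B' * A') ((a : WithOne S) * b), key4]⟩
  
end aux4

lemma spow_idem_unique {S : Type*} [Semigroup S] {x : S} {m n : ℕ}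
    (hm : IsIdempotentElem (spow x m)) (hn : IsIdempotentElem (spow x n)) :
    spow x m = spow x n := by
  have h1 : spow x m = spow x (m*n + m + n) := by
    rw [← spow_spow]
    exact (spow_idem hm n).symm
  have h2 : spow x n = spow x (n*m + n + m) := by
    rw [← spow_spow]
    exact (spow_idem hn m).symm
  rw [h1, h2, show m*n+m+n = n*m+n+m by ring]


theorem statement8 {S : Type*} [Semigroup S]
    (hper : IsPeriodicSemigroup S)
    (hc : ∀ e : S, IsIdempotentElem e → e ∈ centerSet S) :
    (∀ x : S, ∃! y : S, (∃ n : ℕ, y = spow x n) ∧ IsIdempotentElem y) ∧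
    (∀ π : S → S,
      (∀ x : S, (∃ n : ℕ, π x = spow x n) ∧ IsIdempotentElem (π x)) →
      ∀ x y : S, π (x * y) = π x * π y) ∧
    (∀ x y : S, IsIdempotentElem x → IsIdempotentElem y →
      ∀ a ∈ HClass x, ∀ b ∈ HClass y, a * b ∈ HClass (x * y)) ∧
    (∀ a ∈ CliffordPart S, ∀ b ∈ CliffordPart S, a * b ∈ CliffordPart S) := by
  have hcen : ∀ e : S, IsIdempotentElem e → ∀ s : S, e * s = s * e := fun e he => hc e he
  have hmulmem : ∀ x y : S, IsIdempotentElem x → IsIdempotentElem y →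
      ∀ a ∈ HClass x, ∀ b ∈ HClass y, a * b ∈ HClass (x * y) := by
    intro x y hx hy
    exact hMul_mem_hclass (hcen x hx) (hcen y hy) hx hy
  refine ⟨?_, ?_, hmulmem, ?_⟩
  · intro x
    obtain ⟨n, hn⟩ := hper x
    refine ⟨spow x n, ⟨⟨n, rfl⟩, hn⟩, ?_⟩
    rintro y ⟨⟨m, rfl⟩, hm⟩
    exact spow_idem_unique hm hn
  · intro π hπ x y
    obtain ⟨⟨nx, hex⟩, hei⟩ := hπ x
    obtain ⟨⟨ny, hfy⟩, hfi⟩ := hπ y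
    obtain ⟨⟨c, hgc⟩, hgi⟩ := hπ (x*y)
    exact central_pi_mul hex.symm (hcen _ hei) hei hfy.symm (hcen _ hfi) hfi
      hgc.symm (hcen _ hgi) hgi
  · rintro a ⟨e, he, hae⟩ b ⟨f, hf, hbf⟩
    have hee : e * e = e := he
    have hff : f * f = f := hf
    refine ⟨e*f, ?_, hmulmem e f he hf a hae b hbf⟩
    show (e*f)*(e*f) = e*f
    calc (e*f)*(e*f) = e*((f*e)*f) := by rw [mul_assoc, ← mul_assoc f e f]
      _ = e*((e*f)*f) := by rw [← hcen e he f]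
      _ = (e*e)*(f*f) := by rw [mul_assoc e f f, ← mul_assoc]
      _ = e*f := by rw [hee, hff]
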